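/- (Regularity of the credibility premium.) Let T ≥ 2 be an integer, ρ ∈ (0,1), σ > 0, and let λ_1,…,λ_T, λ_{T+1} > 0 and q_1,…,q_T > 0 be real numbers. Let Σ_T be the T×T matrix with [Σ_T]_{t,t} = q_t + σ²λ_t² and [Σ_T]_{s,t} = σ²λ_sλ_t ρ^{|s−t|} for s ≠ t, and let c ∈ ℝ^T with c_t = σ²λ_tλ_{T+1}ρ^{T+1−t}. Then Σ_T is invertible and every coordinate of Σ_T^{−1}c is strictly positive: (Σ_T^{−1}c)_t > 0 for t = 1,…,T. -/

import Mathlib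

open Matrix

/-- Covariance matrix of the observations in the AR(1) state-space model:
diagonal entries `q_t + σ²λ_t²`, off-diagonal entries `σ²λ_sλ_tρ^{|s−t|}`
(one-based sequences `lam`, `q`). -/
noncomputable def covMat (T : ℕ) (ρ σ : ℝ) (lam q : ℕ → ℝ) :
    Matrix (Fin T) (Fin T) ℝ :=
  Matrix.of fun s t =>
    if s = t then q ((s : ℕ) + 1) + σ ^ 2 * (lam ((s : ℕ) + 1)) ^ 2
    else σ ^ 2 * lam ((s : ℕ) + 1) * lam ((t : ℕ) + 1) *
      ρ ^ (Int.natAbs ((s : ℤ) - (t : ℤ)))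

namespace Stmt10Aux


/-- symmetric tridiagonal matrix: diagonal `dg`, sub/super-diagonal `-ρ`. -/
noncomputable def tri (T : ℕ) (ρ : ℝ) (dg : Fin T → ℝ) : Matrix (Fin T) (Fin T) ℝ :=
  Matrix.of fun i j => if i = j then dg i
    else if (((i : ℕ) : ℤ) - ((j : ℕ) : ℤ)).natAbs = 1 then -ρ else 0

/-- AR(1) correlation matrix. -/
noncomputable def Rm (T : ℕ) (ρ : ℝ) : Matrix (Fin T) (Fin T) ℝ :=
  Matrix.of fun i j => ρ ^ (((i : ℕ) : ℤ) - ((j : ℕ) : ℤ)).natAbs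

lemma tri_symm (T : ℕ) (ρ : ℝ) (dg : Fin T → ℝ) (i j : Fin T) :
    tri T ρ dg i j = tri T ρ dg j i := by
  simp only [tri, Matrix.of_apply]
  by_cases h : i = j
  · subst h; rfl
  · rw [if_neg h, if_neg (Ne.symm h)]
    by_cases h2 : (((i:ℕ):ℤ) - ((j:ℕ):ℤ)).natAbs = 1
    · rw [if_pos h2, if_pos (by omega)]
    · rw [if_neg h2, if_neg (by omega)]

lemma tri_row (T : ℕ) (ρ : ℝ) (dg : Fin T → ℝ) (v : Fin T → ℝ) (i : Fin T) :
    ∑ j, tri T ρ dg i j * v j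
      = dg i * v i - ρ * (∑ j : Fin T, if (j : ℕ) + 1 = (i : ℕ) then v j else 0)
                   - ρ * (∑ j : Fin T, if (j : ℕ) = (i : ℕ) + 1 then v j else 0) := by
  have h : ∀ j : Fin T, tri T ρ dg i j * v j
      = (if i = j then dg i * v j else 0)
        + (-ρ) * (if (j : ℕ) + 1 = (i : ℕ) then v j else 0)
        + (-ρ) * (if (j : ℕ) = (i : ℕ) + 1 then v j else 0) := by
    intro j
    simp only [tri, Matrix.of_apply]
    by_cases h1 : i = j
    · subst h1
      rw [if_pos rfl, if_pos rfl, if_neg (by omega), if_neg (by omega)]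
      ring
    · have hne : (i : ℕ) ≠ (j : ℕ) := fun h => h1 (Fin.ext h)
      rw [if_neg h1, if_neg h1]
      by_cases h2 : (((i:ℕ):ℤ) - ((j:ℕ):ℤ)).natAbs = 1
      · rw [if_pos h2]
        rcases (by omega : (j : ℕ) + 1 = (i : ℕ) ∨ (j : ℕ) = (i : ℕ) + 1) with h3 | h3
        · rw [if_pos h3, if_neg (by omega)]; ring
        · rw [if_pos h3, if_neg (by omega)]; ring
      · rw [if_neg h2, if_neg (by omega), if_neg (by omega)]; ring
  rw [Finset.sum_congr rfl fun j _ => h j]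
  rw [Finset.sum_add_distrib, Finset.sum_add_distrib, ← Finset.mul_sum, ← Finset.mul_sum,
    Finset.sum_ite_eq Finset.univ i (fun j => dg i * v j)]
  simp only [Finset.mem_univ, if_pos]
  ring

lemma tri_mulVec (T : ℕ) (ρ : ℝ) (dg : Fin T → ℝ) (v : Fin T → ℝ) (i : Fin T) :
    (tri T ρ dg).mulVec v i
      = dg i * v i - ρ * (∑ j : Fin T, if (j : ℕ) + 1 = (i : ℕ) then v j else 0)
                   - ρ * (∑ j : Fin T, if (j : ℕ) = (i : ℕ) + 1 then v j else 0) :=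
  tri_row T ρ dg v i

lemma sum_pred0 (T : ℕ) (v : Fin T → ℝ) (i : Fin T) (hi : (i : ℕ) = 0) :
    (∑ j : Fin T, if (j : ℕ) + 1 = (i : ℕ) then v j else 0) = 0 :=
  Finset.sum_eq_zero fun j _ => if_neg (by omega)

lemma sum_pred (T : ℕ) (v : Fin T → ℝ) (i : Fin T) (hi : 0 < (i : ℕ)) :
    (∑ j : Fin T, if (j : ℕ) + 1 = (i : ℕ) then v j else 0)
      = v ⟨(i : ℕ) - 1, by omega⟩ := by
  rw [Finset.sum_eq_single (⟨(i : ℕ) - 1, by omega⟩ : Fin T)]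
  · rw [if_pos (by simp; omega)]
  · intro j _ hj
    exact if_neg fun h => hj (Fin.ext (by simp; omega))
  · intro h; exact absurd (Finset.mem_univ _) h

lemma sum_succT (T : ℕ) (v : Fin T → ℝ) (i : Fin T) (hi : (i : ℕ) + 1 = T) :
    (∑ j : Fin T, if (j : ℕ) = (i : ℕ) + 1 then v j else 0) = 0 :=
  Finset.sum_eq_zero fun j _ => if_neg (by omega)

lemma sum_succ (T : ℕ) (v : Fin T → ℝ) (i : Fin T) (hi : (i : ℕ) + 1 < T) :
    (∑ j : Fin T, if (j : ℕ) = (i : ℕ) + 1 then v j else 0) = v ⟨(i : ℕ) + 1, hi⟩ := by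
  rw [Finset.sum_eq_single (⟨(i : ℕ) + 1, hi⟩ : Fin T)]
  · rw [if_pos (by simp)]
  · intro j _ hj
    exact if_neg fun h => hj (Fin.ext (by simp; omega))
  · intro h; exact absurd (Finset.mem_univ _) h

noncomputable def sdg (T : ℕ) (ρ : ℝ) : Fin T → ℝ :=
  fun i => if (i : ℕ) = 0 ∨ (i : ℕ) + 1 = T then 1 else 1 + ρ ^ 2

lemma sum_pred_R (T : ℕ) (ρ : ℝ) (i j : Fin T) (hj : 0 < (j : ℕ)) :
    (∑ k : Fin T, if (k : ℕ) + 1 = (j : ℕ) then Rm T ρ i k else 0)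
      = ρ ^ ((((i : ℕ) : ℤ) - ((j : ℕ) : ℤ) + 1).natAbs) := by
  rw [sum_pred T _ j hj]
  simp only [Rm, Matrix.of_apply]
  congr 1
  omega

lemma sum_succ_R (T : ℕ) (ρ : ℝ) (i j : Fin T) (hj : (j : ℕ) + 1 < T) :
    (∑ k : Fin T, if (k : ℕ) = (j : ℕ) + 1 then Rm T ρ i k else 0)
      = ρ ^ ((((i : ℕ) : ℤ) - ((j : ℕ) : ℤ) - 1).natAbs) := by
  rw [sum_succ T _ j hj]
  simp only [Rm, Matrix.of_apply]
  congr 1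
  omega

lemma RS (T : ℕ) (hT : 2 ≤ T) (ρ : ℝ) :
    Rm T ρ * tri T ρ (sdg T ρ) = (1 - ρ ^ 2) • (1 : Matrix (Fin T) (Fin T) ℝ) := by
  ext i j
  have hcomm : ∀ k : Fin T, Rm T ρ i k * tri T ρ (sdg T ρ) k j
      = tri T ρ (sdg T ρ) j k * Rm T ρ i k := fun k => by rw [tri_symm]; ring
  rw [Matrix.mul_apply, Finset.sum_congr rfl fun k _ => hcomm k,
    tri_row T ρ (sdg T ρ) (fun k => Rm T ρ i k) j, Matrix.smul_apply, Matrix.one_apply, smul_eq_mul]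
  have hRij : Rm T ρ i j = ρ ^ ((((i : ℕ) : ℤ) - ((j : ℕ) : ℤ)).natAbs) := rfl
  set a : ℤ := ((i : ℕ) : ℤ)
  set b : ℤ := ((j : ℕ) : ℤ)
  have hij : (i = j) ↔ (a = b) := by
    constructor
    · intro h; subst h; rfl
    · intro h; exact Fin.ext (by omega)
  by_cases hb0 : (j : ℕ) = 0
  · rw [sum_pred0 T _ j hb0, sum_succ_R T ρ i j (by omega), hRij]
    rw [sdg, if_pos (Or.inl hb0)]
    rcases eq_or_ne i j with h | h
    · rw [if_pos h]
      have ha : a = b := hij.1 h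
      rw [show (a - b).natAbs = 0 by omega, show (a - b - 1).natAbs = 1 by omega]
      ring
    · rw [if_neg h]
      have ha : a ≠ b := fun hh => h (hij.2 hh)
      have ha2 : 0 < a := by omega
      obtain ⟨n, hn⟩ : ∃ n : ℕ, (a - b).natAbs = n + 1 := ⟨(a - b).natAbs - 1, by omega⟩
      rw [hn, show (a - b - 1).natAbs = n by omega]
      ring
  · by_cases hbT : (j : ℕ) + 1 = T
    · rw [sum_succT T _ j hbT, sum_pred_R T ρ i j (by omega), hRij]
      rw [sdg, if_pos (Or.inr hbT)]
      rcases eq_or_ne i j with h | h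
      · rw [if_pos h]
        have ha : a = b := hij.1 h
        rw [show (a - b).natAbs = 0 by omega, show (a - b + 1).natAbs = 1 by omega]
        ring
      · rw [if_neg h]
        have ha : a ≠ b := fun hh => h (hij.2 hh)
        have ha2 : a < b := by
          have : (i : ℕ) < T := i.isLt
          omega
        obtain ⟨n, hn⟩ : ∃ n : ℕ, (a - b).natAbs = n + 1 := ⟨(a - b).natAbs - 1, by omega⟩
        rw [hn, show (a - b + 1).natAbs = n by omega]
        ring
    · rw [sum_pred_R T ρ i j (by omega), sum_succ_R T ρ i j (by omega), hRij]
      rw [sdg, if_neg (by push_neg; exact ⟨hb0, hbT⟩)]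
      rcases lt_trichotomy a b with h | h | h
      · rw [if_neg (fun hh => absurd (hij.1 hh) (by omega))]
        obtain ⟨n, hn⟩ : ∃ n : ℕ, (a - b).natAbs = n + 1 := ⟨(a - b).natAbs - 1, by omega⟩
        rw [hn, show (a - b + 1).natAbs = n by omega, show (a - b - 1).natAbs = n + 2 by omega]
        ring
      · rw [if_pos (hij.2 h)]
        rw [show (a - b).natAbs = 0 by omega, show (a - b + 1).natAbs = 1 by omega,
          show (a - b - 1).natAbs = 1 by omega]
        ring
      · rw [if_neg (fun hh => absurd (hij.1 hh) (by omega))]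
        obtain ⟨n, hn⟩ : ∃ n : ℕ, (a - b).natAbs = n + 1 := ⟨(a - b).natAbs - 1, by omega⟩
        rw [hn, show (a - b + 1).natAbs = n + 2 by omega, show (a - b - 1).natAbs = n by omega]
        ring

section Dom
variable {T : ℕ} {ρ : ℝ} {dg : Fin T → ℝ}
  (hρ : 0 < ρ)
  (hend : ∀ i : Fin T, ρ < dg i)
  (hint : ∀ i : Fin T, 0 < (i : ℕ) → (i : ℕ) + 1 < T → 2 * ρ < dg i)

include hρ hend hint

lemma tri_ker (v : Fin T → ℝ) (hv : (tri T ρ dg).mulVec v = 0) : v = 0 := by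
  by_contra hne
  obtain ⟨j0, hj0⟩ := Function.ne_iff.1 hne
  obtain ⟨i, -, hmax⟩ := Finset.exists_max_image Finset.univ (fun j => |v j|)
    ⟨j0, Finset.mem_univ _⟩
  have hvi : 0 < |v i| := lt_of_lt_of_le (abs_pos.2 hj0) (hmax j0 (Finset.mem_univ _))
  have hdg : 0 < dg i := lt_trans hρ (hend i)
  have hrow := congrFun hv i
  rw [tri_mulVec] at hrow
  simp only [Pi.zero_apply] at hrow
  by_cases h0 : (i : ℕ) = 0
  · rw [sum_pred0 T v i h0] at hrow
    by_cases hT1 : (i : ℕ) + 1 = T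
    · rw [sum_succT T v i hT1] at hrow
      have : v i = 0 := by nlinarith [abs_nonneg (v i), abs_le.1 (le_refl |v i|)]
      rw [this] at hvi; simp at hvi
    · rw [sum_succ T v i (by omega)] at hrow
      set u := v ⟨(i : ℕ) + 1, by omega⟩ with hu
      have h1 : dg i * v i = ρ * u := by linarith
      have h2 : dg i * |v i| = ρ * |u| := by
        rw [← abs_of_pos hdg, ← abs_mul, h1, abs_mul, abs_of_pos hρ]
      have h3 : |u| ≤ |v i| := hmax _ (Finset.mem_univ _)
      nlinarith [hend i]
  · by_cases hT1 : (i : ℕ) + 1 = T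
    · rw [sum_succT T v i hT1, sum_pred T v i (by omega)] at hrow
      set u := v ⟨(i : ℕ) - 1, by omega⟩ with hu
      have h1 : dg i * v i = ρ * u := by linarith
      have h2 : dg i * |v i| = ρ * |u| := by
        rw [← abs_of_pos hdg, ← abs_mul, h1, abs_mul, abs_of_pos hρ]
      have h3 : |u| ≤ |v i| := hmax _ (Finset.mem_univ _)
      nlinarith [hend i]
    · rw [sum_pred T v i (by omega), sum_succ T v i (by omega)] at hrow
      set u1 := v ⟨(i : ℕ) - 1, by omega⟩ with hu1
      set u2 := v ⟨(i : ℕ) + 1, by omega⟩ with hu2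
      have h1 : dg i * v i = ρ * u1 + ρ * u2 := by linarith
      have h2 : dg i * |v i| = |ρ * u1 + ρ * u2| := by
        rw [← abs_of_pos hdg, ← abs_mul, h1]
      have h3 : |ρ * u1 + ρ * u2| ≤ ρ * |u1| + ρ * |u2| := by
        refine le_trans (abs_add_le _ _) ?_
        rw [abs_mul, abs_mul, abs_of_pos hρ]
      have h4 : |u1| ≤ |v i| := hmax _ (Finset.mem_univ _)
      have h5 : |u2| ≤ |v i| := hmax _ (Finset.mem_univ _)
      nlinarith [hint i (by omega) (by omega)]

lemma tri_det_ne_zero : (tri T ρ dg).det ≠ 0 := by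
  intro h
  obtain ⟨v, hv, hmv⟩ := (Matrix.exists_mulVec_eq_zero_iff).2 h
  exact hv (tri_ker hρ hend hint v hmv)

lemma tri_nonneg (z e : Fin T → ℝ) (he : ∀ i, 0 ≤ e i)
    (hv : (tri T ρ dg).mulVec z = e) : ∀ t : Fin T, 0 ≤ z t := by
  intro t
  obtain ⟨i, -, hmin⟩ := Finset.exists_min_image Finset.univ z ⟨t, Finset.mem_univ _⟩
  suffices h : 0 ≤ z i from le_trans h (hmin t (Finset.mem_univ _))
  by_contra hneg
  push_neg at hneg
  have hdg : 0 < dg i := lt_trans hρ (hend i)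
  have hrow := congrFun hv i
  rw [tri_mulVec] at hrow
  have hei := he i
  by_cases h0 : (i : ℕ) = 0
  · rw [sum_pred0 T z i h0] at hrow
    by_cases hT1 : (i : ℕ) + 1 = T
    · rw [sum_succT T z i hT1] at hrow
      nlinarith
    · rw [sum_succ T z i (by omega)] at hrow
      have h3 : z i ≤ z ⟨(i : ℕ) + 1, by omega⟩ := hmin _ (Finset.mem_univ _)
      nlinarith [hend i]
  · by_cases hT1 : (i : ℕ) + 1 = T
    · rw [sum_succT T z i hT1, sum_pred T z i (by omega)] at hrow
      have h3 : z i ≤ z ⟨(i : ℕ) - 1, by omega⟩ := hmin _ (Finset.mem_univ _)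
      nlinarith [hend i]
    · rw [sum_pred T z i (by omega), sum_succ T z i (by omega)] at hrow
      have h3 : z i ≤ z ⟨(i : ℕ) - 1, by omega⟩ := hmin _ (Finset.mem_univ _)
      have h4 : z i ≤ z ⟨(i : ℕ) + 1, by omega⟩ := hmin _ (Finset.mem_univ _)
      nlinarith [hint i (by omega) (by omega)]

lemma tri_pos (hT : 2 ≤ T) (z : Fin T → ℝ)
    (hv : (tri T ρ dg).mulVec z = Pi.single (⟨T - 1, by omega⟩ : Fin T) 1)
    (hz0 : ∀ i, 0 ≤ z i) : ∀ t : Fin T, 0 < z t := by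
  have key : ∀ n : ℕ, ∀ i : Fin T, (i : ℕ) + 1 + n = T → 0 < z i := by
    intro n
    induction n with
    | zero =>
      intro i hi
      have hdg : 0 < dg i := lt_trans hρ (hend i)
      have hrow := congrFun hv i
      rw [tri_mulVec] at hrow
      rw [Pi.single_apply, if_pos (Fin.ext (show (i:ℕ) = T - 1 by omega)),
        sum_succT T z i (by omega), sum_pred T z i (by omega)] at hrow
      have h3 : 0 ≤ z ⟨(i : ℕ) - 1, by omega⟩ := hz0 _
      nlinarith [hz0 i]
    | succ m ih =>
      intro i hi
      have hdg : 0 < dg i := lt_trans hρ (hend i)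
      have hrow := congrFun hv i
      rw [tri_mulVec] at hrow
      rw [Pi.single_apply, if_neg (fun h => by
        have : (i : ℕ) = T - 1 := congrArg Fin.val h
        omega)] at hrow
      have hsucc : 0 < z ⟨(i : ℕ) + 1, by omega⟩ := by
        refine ih ⟨(i : ℕ) + 1, by omega⟩ ?_
        simp only [Fin.val_mk]
        omega
      rw [sum_succ T z i (by omega)] at hrow
      by_cases h0 : (i : ℕ) = 0
      · rw [sum_pred0 T z i h0] at hrow
        nlinarith [hz0 i]
      · rw [sum_pred T z i (by omega)] at hrow
        have h3 : 0 ≤ z ⟨(i : ℕ) - 1, by omega⟩ := hz0 _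
        nlinarith [hz0 i]
  intro t
  exact key (T - 1 - (t : ℕ)) t (by omega)

end Dom

end Stmt10Aux

open Stmt10Aux

/-- regularity of the credibility premium.  For `ρ ∈ (0,1)`,
`Σ_T` is invertible and every coordinate of `Σ_T⁻¹c` is strictly positive,
where `c_t = σ²λ_tλ_{T+1}ρ^{T+1−t}`. -/
theorem stmt10 (T : ℕ) (hT : 2 ≤ T) (ρ : ℝ) (hρ1 : 0 < ρ) (hρ2 : ρ < 1)
    (σ : ℝ) (hσ : 0 < σ) (lam q : ℕ → ℝ)
    (hlam : ∀ t, 1 ≤ t → t ≤ T + 1 → 0 < lam t)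
    (hq : ∀ t, 1 ≤ t → t ≤ T → 0 < q t) :
    IsUnit (covMat T ρ σ lam q) ∧
    ∀ t : Fin T,
      0 < (covMat T ρ σ lam q)⁻¹.mulVec
          (fun s : Fin T =>
            σ ^ 2 * lam ((s : ℕ) + 1) * lam (T + 1) * ρ ^ (T - (s : ℕ))) t := by
  have hρ2' : 0 < 1 - ρ ^ 2 := by nlinarith
  have hlam' : ∀ t : Fin T, 0 < lam ((t : ℕ) + 1) :=
    fun t => hlam _ (by omega) (by have := t.isLt; omega)
  have hlamT : 0 < lam (T + 1) := hlam _ (by omega) (by omega)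
  have hq' : ∀ t : Fin T, 0 < q ((t : ℕ) + 1) :=
    fun t => hq _ (by omega) (by have := t.isLt; omega)
  set dL : Fin T → ℝ := fun t => lam ((t : ℕ) + 1) with hdL
  set dE : Fin T → ℝ := fun t => q ((t : ℕ) + 1) / lam ((t : ℕ) + 1) ^ 2 with hdE
  set dK : Fin T → ℝ :=
    fun t => σ ^ 2 * (1 - ρ ^ 2) * (lam ((t : ℕ) + 1) ^ 2 / q ((t : ℕ) + 1)) with hdK
  set gdg : Fin T → ℝ := fun i => sdg T ρ i + dK i with hgdg
  have hdKpos : ∀ t : Fin T, 0 < dK t := fun t => by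
    have h1 := hlam' t; have h2 := hq' t
    simp only [hdK]
    positivity
  -- diagonal dominance hypotheses
  have hend : ∀ i : Fin T, ρ < gdg i := by
    intro i
    have h1 : (1 : ℝ) ≤ sdg T ρ i := by
      simp only [sdg]; split
      · exact le_refl _
      · nlinarith
    have := hdKpos i
    simp only [hgdg]
    nlinarith
  have hint : ∀ i : Fin T, 0 < (i : ℕ) → (i : ℕ) + 1 < T → 2 * ρ < gdg i := by
    intro i h0 h1
    have h2 : sdg T ρ i = 1 + ρ ^ 2 := by
      simp only [sdg]; rw [if_neg (by omega)]
    have := hdKpos i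
    simp only [hgdg]
    nlinarith
  have hdetG : (tri T ρ gdg).det ≠ 0 := tri_det_ne_zero hρ1 hend hint
  have hGunit : IsUnit (tri T ρ gdg).det := isUnit_iff_ne_zero.2 hdetG
  -- the positive vector z
  set z : Fin T → ℝ :=
    (tri T ρ gdg)⁻¹.mulVec (Pi.single (⟨T - 1, by omega⟩ : Fin T) 1) with hz
  have hGz : (tri T ρ gdg).mulVec z = Pi.single (⟨T - 1, by omega⟩ : Fin T) 1 := by
    rw [hz, mulVec_mulVec, Matrix.mul_nonsing_inv _ hGunit, one_mulVec]
  have hz0 : ∀ i, 0 ≤ z i :=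
    tri_nonneg hρ1 hend hint z _
      (fun i => by
        rw [Pi.single_apply]; split
        · norm_num
        · exact le_refl 0) hGz
  have hzpos : ∀ i, 0 < z i := tri_pos hρ1 hend hint hT z hGz hz0
  -- structural identities
  have hG_eq : tri T ρ gdg = tri T ρ (sdg T ρ) + Matrix.diagonal dK := by
    ext i j
    simp only [tri, Matrix.of_apply, Matrix.add_apply, Matrix.diagonal_apply, hgdg]
    by_cases h : i = j
    · rw [if_pos h, if_pos h, if_pos h]
    · rw [if_neg h, if_neg h, if_neg h, add_zero]
  have hRG : Rm T ρ * tri T ρ gdg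
      = (1 - ρ ^ 2) • (1 : Matrix (Fin T) (Fin T) ℝ) + Rm T ρ * Matrix.diagonal dK := by
    rw [hG_eq, Matrix.mul_add, RS T hT ρ]
  have hDκE : Matrix.diagonal dK * Matrix.diagonal dE
      = (σ ^ 2 * (1 - ρ ^ 2)) • (1 : Matrix (Fin T) (Fin T) ℝ) := by
    rw [Matrix.diagonal_mul_diagonal]
    ext i j
    simp only [Matrix.diagonal_apply, Matrix.smul_apply, Matrix.one_apply, smul_eq_mul]
    by_cases h : i = j
    · rw [if_pos h, if_pos h, mul_one, hdK, hdE]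
      have h1 := (hlam' i).ne'
      have h2 := (hq' i).ne'
      field_simp
    · rw [if_neg h, if_neg h, mul_zero]
  have hmid : Rm T ρ * tri T ρ gdg * Matrix.diagonal dE
      = (1 - ρ ^ 2) • (Matrix.diagonal dE + σ ^ 2 • Rm T ρ) := by
    rw [hRG, Matrix.add_mul, Matrix.smul_mul, Matrix.one_mul, Matrix.mul_assoc, hDκE,
      Matrix.mul_smul, Matrix.mul_one, smul_add, smul_smul]
    ring_nf
  have hfact : covMat T ρ σ lam q
      = Matrix.diagonal dL * (Matrix.diagonal dE + σ ^ 2 • Rm T ρ) * Matrix.diagonal dL := by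
    ext i j
    rw [Matrix.mul_diagonal, Matrix.diagonal_mul]
    simp only [covMat, Matrix.of_apply, Matrix.add_apply, Matrix.smul_apply,
      Matrix.diagonal_apply, smul_eq_mul, Rm, hdL, hdE]
    by_cases h : i = j
    · rw [if_pos h, if_pos h]
      have h2 : ((((i : ℕ) : ℤ) - ((j : ℕ) : ℤ)).natAbs) = 0 := by
        subst h; omega
      rw [h2, pow_zero]
      have h1 := (hlam' i).ne'
      subst h
      field_simp
    · rw [if_neg h, if_neg h, zero_add]
      have h2 : ((i : ℤ) - (j : ℤ)).natAbs = ((((i : ℕ) : ℤ) - ((j : ℕ) : ℤ)).natAbs) := by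
        norm_cast
      rw [h2]
      ring
  -- determinants
  have hdetR : (Rm T ρ).det ≠ 0 := by
    have h1 : (Rm T ρ).det * (tri T ρ (sdg T ρ)).det
        = (1 - ρ ^ 2) ^ Fintype.card (Fin T) := by
      rw [← Matrix.det_mul, RS T hT ρ, Matrix.det_smul, Matrix.det_one, mul_one]
    intro h0
    rw [h0, zero_mul] at h1
    exact pow_ne_zero _ hρ2'.ne' h1.symm
  have hdetE : (Matrix.diagonal dE).det ≠ 0 := by
    rw [Matrix.det_diagonal]
    exact Finset.prod_ne_zero_iff.2
      (fun i _ => (div_pos (hq' i) (pow_pos (hlam' i) 2)).ne')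
  have hdetL : (Matrix.diagonal dL).det ≠ 0 := by
    rw [Matrix.det_diagonal]
    exact Finset.prod_ne_zero_iff.2 (fun i _ => (hlam' i).ne')
  have hdetM : (Matrix.diagonal dE + σ ^ 2 • Rm T ρ).det ≠ 0 := by
    intro h0
    have h1 := congrArg Matrix.det hmid
    rw [Matrix.det_mul, Matrix.det_mul, Matrix.det_smul, h0, mul_zero] at h1
    exact (mul_ne_zero (mul_ne_zero hdetR hdetG) hdetE) h1
  have hdetS : (covMat T ρ σ lam q).det ≠ 0 := by
    rw [hfact, Matrix.det_mul, Matrix.det_mul]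
    exact mul_ne_zero (mul_ne_zero hdetL hdetM) hdetL
  refine ⟨(Matrix.isUnit_iff_isUnit_det _).2 (isUnit_iff_ne_zero.2 hdetS), ?_⟩
  set w : Fin T → ℝ := fun t => Rm T ρ t ⟨T - 1, by omega⟩ with hw
  have h3 : (Rm T ρ * tri T ρ gdg).mulVec z = w := by
    rw [← mulVec_mulVec, hGz, mulVec_single]
    funext t
    simp [hw]
  rw [hRG] at h3
  have h2 : ∀ t, (Rm T ρ).mulVec ((Matrix.diagonal dK).mulVec z) t
      = w t - (1 - ρ ^ 2) * z t := by
    intro t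
    have h4 := congrFun h3 t
    rw [add_mulVec, smul_mulVec, one_mulVec] at h4
    rw [mulVec_mulVec]
    simp only [Pi.add_apply, Pi.smul_apply, smul_eq_mul] at h4
    linarith
  set v : Fin T → ℝ :=
    fun t => σ ^ 2 * lam (T + 1) * ρ * (1 - ρ ^ 2)
      * (lam ((t : ℕ) + 1) ^ 2 / q ((t : ℕ) + 1)) * z t with hv
  set x : Fin T → ℝ :=
    fun t => σ ^ 2 * lam (T + 1) * ρ * (1 - ρ ^ 2)
      * (lam ((t : ℕ) + 1) / q ((t : ℕ) + 1)) * z t with hx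
  have hLx : (Matrix.diagonal dL).mulVec x = v := by
    funext t
    rw [mulVec_diagonal]
    simp only [hx, hv, hdL]
    have h1 := (hq' t).ne'
    field_simp
  have hvK : v = (lam (T + 1) * ρ) • ((Matrix.diagonal dK).mulVec z) := by
    funext t
    rw [Pi.smul_apply, mulVec_diagonal, smul_eq_mul]
    simp only [hv, hdK]
    ring
  have hMv : (Matrix.diagonal dE + σ ^ 2 • Rm T ρ).mulVec v
      = fun t => σ ^ 2 * lam (T + 1) * ρ * w t := by
    funext t
    rw [add_mulVec, smul_mulVec]
    simp only [Pi.add_apply, Pi.smul_apply, smul_eq_mul]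
    rw [mulVec_diagonal]
    have hR : (Rm T ρ).mulVec v t
        = lam (T + 1) * ρ * ((Rm T ρ).mulVec ((Matrix.diagonal dK).mulVec z) t) := by
      rw [hvK, mulVec_smul]
      simp
    rw [hR, h2 t]
    simp only [hdE, hv]
    have h1 := (hlam' t).ne'
    have h2q := (hq' t).ne'
    field_simp
    ring
  have hSx : (covMat T ρ σ lam q).mulVec x
      = fun s : Fin T => σ ^ 2 * lam ((s : ℕ) + 1) * lam (T + 1) * ρ ^ (T - (s : ℕ)) := by
    rw [hfact, ← mulVec_mulVec, ← mulVec_mulVec, hLx, hMv]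
    funext t
    rw [mulVec_diagonal]
    simp only [hdL, hw, Rm, Matrix.of_apply]
    have he : ((((t : ℕ) : ℤ)
        - (((⟨T - 1, by omega⟩ : Fin T) : ℕ) : ℤ)).natAbs) = T - 1 - (t : ℕ) := by
      simp only [Fin.val_mk]
      omega
    rw [he, show T - (t : ℕ) = (T - 1 - (t : ℕ)) + 1 from by have := t.isLt; omega, pow_succ]
    ring
  have hxeq : (covMat T ρ σ lam q)⁻¹.mulVec
      (fun s : Fin T => σ ^ 2 * lam ((s : ℕ) + 1) * lam (T + 1) * ρ ^ (T - (s : ℕ))) = x := by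
    rw [← hSx, mulVec_mulVec, Matrix.nonsing_inv_mul _ (isUnit_iff_ne_zero.2 hdetS),
      one_mulVec]
  intro t
  rw [hxeq]
  simp only [hx]
  exact mul_pos (mul_pos (mul_pos (mul_pos (mul_pos (pow_pos hσ 2) hlamT) hρ1) hρ2')
    (div_pos (hlam' t) (hq' t))) (hzpos t)
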